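/- For every integer k ≥ 1 and every complex number q with 0 < |q| < 1, ∑_{m=0}^{∞} q^{m(m−1)/2 + (2k+1)m} · (q^k;q)_m / ((q;q)_m · (−q^{3k+1};q)_m) = (−q^{2k+1};q)_∞ / (−q^{3k+1};q)_∞. -/

import Mathlib

open Finset

/-- Finite q-Pochhammer symbol: (a;q)_n = ∏_{j=0}^{n-1} (1 - a q^j). -/
noncomputable def qPoch (a q : ℂ) (n : ℕ) : ℂ := ∏ j ∈ Finset.range n, (1 - a * q ^ j)

/-- Infinite q-Pochhammer symbol: (a;q)_∞ = ∏_{j=0}^{∞} (1 - a q^j). -/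
noncomputable def qPochInf (a q : ℂ) : ℂ := ∏' j : ℕ, (1 - a * q ^ j)

/-- Gaussian binomial coefficient [N choose j]_q, as a rational function of q;
for 0 < |q| < 1 (and for |q⁻¹| > 1) this agrees with the q-binomial polynomial
evaluated at q. -/
noncomputable def qBinom (q : ℂ) (N j : ℕ) : ℂ :=
  qPoch q q N / (qPoch q q j * qPoch q q (N - j))

open Filter Topology

variable {a q z : ℂ}

lemma qPoch_succ (a q : ℂ) (n : ℕ) :
    qPoch a q (n + 1) = qPoch a q n * (1 - a * q ^ n) := Finset.prod_range_succ _ _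

lemma norm_aqj_lt (ha : ‖a‖ < 1) (hq : ‖q‖ < 1) (j : ℕ) : ‖a * q ^ j‖ < 1 := by
  rw [norm_mul, norm_pow]
  calc ‖a‖ * ‖q‖ ^ j ≤ ‖a‖ * 1 := by
        gcongr
        exact pow_le_one₀ (norm_nonneg q) hq.le
    _ < 1 := by simpa using ha

lemma factor_ne_zero (ha : ‖a‖ < 1) (hq : ‖q‖ < 1) (j : ℕ) : 1 - a * q ^ j ≠ 0 := by
  intro h
  rw [sub_eq_zero] at h
  have := norm_aqj_lt ha hq j
  rw [← h] at this
  simp at this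

lemma qPoch_ne_zero (ha : ‖a‖ < 1) (hq : ‖q‖ < 1) (n : ℕ) : qPoch a q n ≠ 0 :=
  Finset.prod_ne_zero_iff.2 fun j _ => factor_ne_zero ha hq j

lemma summable_log_qPoch (ha : ‖a‖ < 1) (hq : ‖q‖ < 1) :
    Summable fun j : ℕ => Complex.log (1 - a * q ^ j) := by
  have hgeo : Summable fun j : ℕ => (3 / 2 : ℝ) * (‖a‖ * ‖q‖ ^ j) :=
    (((summable_geometric_of_lt_one (norm_nonneg q) hq).mul_left ‖a‖).mul_left _)
  refine hgeo.of_norm_bounded_eventually_nat ?_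
  have h0 : Tendsto (fun j : ℕ => ‖a‖ * ‖q‖ ^ j) atTop (𝓝 (‖a‖ * 0)) :=
    (tendsto_pow_atTop_nhds_zero_of_lt_one (norm_nonneg q) hq).const_mul _
  rw [mul_zero] at h0
  filter_upwards [h0.eventually_le_const (by norm_num : (0:ℝ) < 1/2)] with j hj
  have h1 : ‖-(a * q ^ j)‖ ≤ 1 / 2 := by
    rw [norm_neg, norm_mul, norm_pow]; exact hj
  have := Complex.norm_log_one_add_half_le_self h1
  rw [show (1 : ℂ) + -(a * q ^ j) = 1 - a * q ^ j by ring] at this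
  calc ‖Complex.log (1 - a * q ^ j)‖ ≤ 3 / 2 * ‖-(a * q ^ j)‖ := this
    _ = 3 / 2 * (‖a‖ * ‖q‖ ^ j) := by rw [norm_neg, norm_mul, norm_pow]

lemma multipliable_qPoch (ha : ‖a‖ < 1) (hq : ‖q‖ < 1) :
    Multipliable fun j : ℕ => 1 - a * q ^ j :=
  Complex.multipliable_of_summable_log (summable_log_qPoch ha hq)

lemma qPochInf_ne_zero (ha : ‖a‖ < 1) (hq : ‖q‖ < 1) : qPochInf a q ≠ 0 := by
  have h := Complex.cexp_tsum_eq_tprod (f := fun j => 1 - a * q ^ j)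
    (fun j => factor_ne_zero ha hq j) (summable_log_qPoch ha hq)
  have h2 := h
  rw [qPochInf, ← h2]
  exact Complex.exp_ne_zero _

lemma tendsto_qPoch (ha : ‖a‖ < 1) (hq : ‖q‖ < 1) :
    Tendsto (fun n => qPoch a q n) atTop (𝓝 (qPochInf a q)) :=
  HasProd.tendsto_prod_nat (multipliable_qPoch ha hq).hasProd

lemma qPochInf_split (ha : ‖a‖ < 1) (hq : ‖q‖ < 1) (m : ℕ) :
    qPochInf a q = qPoch a q m * qPochInf (a * q ^ m) q := by
  have hm : Multipliable fun n : ℕ => 1 - a * q ^ (n + m) := by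
    refine (multipliable_qPoch (norm_aqj_lt ha hq m) hq).congr fun n => ?_
    rw [pow_add]; ring
  have h := Multipliable.prod_mul_tprod_nat_mul' (f := fun j : ℕ => 1 - a * q ^ j) hm
  rw [qPochInf, ← h, qPoch]
  congr 1
  apply tprod_congr
  intro i
  show 1 - a * q ^ (i + m) = 1 - a * q ^ m * q ^ i
  rw [pow_add]; ring

lemma norm_qPoch_le (hq : ‖q‖ < 1) (n : ℕ) :
    ‖qPoch a q n‖ ≤ Real.exp (‖a‖ * (1 - ‖q‖)⁻¹) := by
  have hsum : ∑ j ∈ range n, ‖a‖ * ‖q‖ ^ j ≤ ‖a‖ * (1 - ‖q‖)⁻¹ := by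
    rw [← Finset.mul_sum]
    apply mul_le_mul_of_nonneg_left ?_ (norm_nonneg a)
    calc ∑ j ∈ range n, ‖q‖ ^ j ≤ ∑' j : ℕ, ‖q‖ ^ j :=
        Summable.sum_le_tsum _ (fun i _ => pow_nonneg (norm_nonneg q) i)
          (summable_geometric_of_lt_one (norm_nonneg q) hq)
      _ = (1 - ‖q‖)⁻¹ := tsum_geometric_of_lt_one (norm_nonneg q) hq
  calc ‖qPoch a q n‖ ≤ ∏ j ∈ range n, ‖1 - a * q ^ j‖ := norm_prod_le _ _
    _ ≤ ∏ j ∈ range n, Real.exp (‖a‖ * ‖q‖ ^ j) := by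
        apply Finset.prod_le_prod (fun j _ => norm_nonneg _)
        intro j _
        calc ‖1 - a * q ^ j‖ ≤ ‖(1 : ℂ)‖ + ‖a * q ^ j‖ := norm_sub_le _ _
          _ = ‖a‖ * ‖q‖ ^ j + 1 := by rw [norm_one, norm_mul, norm_pow]; ring
          _ ≤ Real.exp (‖a‖ * ‖q‖ ^ j) := Real.add_one_le_exp _
    _ = Real.exp (∑ j ∈ range n, ‖a‖ * ‖q‖ ^ j) := by rw [Real.exp_sum]
    _ ≤ _ := Real.exp_le_exp.2 hsum

lemma one_sub_sum_le_prod {s : Finset ℕ} {x : ℕ → ℝ} (h0 : ∀ i ∈ s, 0 ≤ x i)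
    (h1 : ∀ i ∈ s, x i ≤ 1) : 1 - ∑ i ∈ s, x i ≤ ∏ i ∈ s, (1 - x i) := by
  classical
  induction s using Finset.cons_induction with
  | empty => simp
  | cons j s hj ih =>
    rw [Finset.sum_cons, Finset.prod_cons]
    have ih' := ih (fun i hi => h0 i (Finset.mem_cons_of_mem hi))
      (fun i hi => h1 i (Finset.mem_cons_of_mem hi))
    have hx0 : 0 ≤ x j := h0 j (Finset.mem_cons_self _ _)
    have hx1 : x j ≤ 1 := h1 j (Finset.mem_cons_self _ _)
    have hS : 0 ≤ ∑ i ∈ s, x i := Finset.sum_nonneg (fun i hi => h0 i (Finset.mem_cons_of_mem hi))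
    nlinarith [ih']

lemma exists_qPoch_lower (ha : ‖a‖ < 1) (hq : ‖q‖ < 1) :
    ∃ c : ℝ, 0 < c ∧ ∀ n, c ≤ ‖qPoch a q n‖ := by
  set x : ℕ → ℝ := fun j => ‖a‖ * ‖q‖ ^ j with hx
  have hx0 : ∀ j, 0 ≤ x j := fun j => mul_nonneg (norm_nonneg a) (pow_nonneg (norm_nonneg q) j)
  have hx1 : ∀ j, x j < 1 := by
    intro j
    have := norm_aqj_lt ha hq j
    rwa [norm_mul, norm_pow] at this
  -- choose J with tail small
  obtain ⟨J, hJ⟩ : ∃ J : ℕ, (‖a‖ + 1) * ‖q‖ ^ J * (1 - ‖q‖)⁻¹ ≤ 1 / 2 := by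
    have h2 : (0:ℝ) < 1/2 * ((1 - ‖q‖) / (‖a‖ + 1)) := by
      apply mul_pos (by norm_num)
      apply div_pos (by linarith) (by positivity)
    obtain ⟨J, hJ⟩ := exists_pow_lt_of_lt_one h2 hq
    refine ⟨J, ?_⟩
    have hstep : (‖a‖ + 1) * ‖q‖ ^ J * (1 - ‖q‖)⁻¹
        ≤ (‖a‖ + 1) * (1/2 * ((1 - ‖q‖) / (‖a‖ + 1))) * (1 - ‖q‖)⁻¹ :=
      mul_le_mul_of_nonneg_right
        (mul_le_mul_of_nonneg_left hJ.le (by positivity)) (inv_nonneg.2 (by linarith))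
    refine hstep.trans (le_of_eq ?_)
    have h1 : (‖a‖ + 1 : ℝ) ≠ 0 := by positivity
    have h2' : (1 - ‖q‖ : ℝ) ≠ 0 := by intro h; rw [sub_eq_zero] at h; linarith
    have hexp : (‖a‖ + 1) * (1/2 * ((1 - ‖q‖) / (‖a‖ + 1))) * (1 - ‖q‖)⁻¹
        = 1/2 * ((‖a‖ + 1) * (‖a‖ + 1)⁻¹) * ((1 - ‖q‖) * (1 - ‖q‖)⁻¹) := by
      rw [div_eq_mul_inv]; ring
    rw [hexp, mul_inv_cancel₀ h1, mul_inv_cancel₀ h2']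
    norm_num
  have htail : ∀ n, ∑ j ∈ Finset.Ico J n, x j ≤ 1 / 2 := by
    intro n
    rcases le_or_gt J n with h | h
    · rw [Finset.sum_Ico_eq_sum_range]
      have : ∀ i ∈ range (n - J), x (J + i) ≤ (‖a‖+1) * ‖q‖ ^ J * ‖q‖ ^ i := by
        intro i _
        rw [hx]
        simp only []
        rw [pow_add]
        have : ‖a‖ ≤ ‖a‖ + 1 := by linarith
        calc ‖a‖ * (‖q‖ ^ J * ‖q‖ ^ i) ≤ (‖a‖+1) * (‖q‖ ^ J * ‖q‖ ^ i) := by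
              gcongr
          _ = (‖a‖+1) * ‖q‖ ^ J * ‖q‖ ^ i := by ring
      calc ∑ i ∈ range (n - J), x (J + i) ≤ ∑ i ∈ range (n-J), (‖a‖+1) * ‖q‖ ^ J * ‖q‖ ^ i :=
            Finset.sum_le_sum this
        _ ≤ ∑' i : ℕ, (‖a‖+1) * ‖q‖ ^ J * ‖q‖ ^ i :=
            Summable.sum_le_tsum _ (fun i _ => by positivity)
              ((summable_geometric_of_lt_one (norm_nonneg q) hq).mul_left _)
        _ = (‖a‖+1) * ‖q‖ ^ J * (1 - ‖q‖)⁻¹ := by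
            rw [tsum_mul_left, tsum_geometric_of_lt_one (norm_nonneg q) hq]
        _ ≤ 1/2 := hJ
    · rw [Finset.Ico_eq_empty (by omega)]
      norm_num
  set P : ℝ := ∏ j ∈ range J, (1 - x j) with hP
  have hPpos : 0 < P := Finset.prod_pos (fun j _ => by linarith [hx1 j])
  refine ⟨P * (1/2), by positivity, fun n => ?_⟩
  have hnorm : ∏ j ∈ range n, (1 - x j) ≤ ‖qPoch a q n‖ := by
    rw [qPoch, norm_prod]
    apply Finset.prod_le_prod (fun j _ => by linarith [hx1 j])
    intro j _
    calc 1 - x j = ‖(1:ℂ)‖ - ‖a * q ^ j‖ := by rw [norm_one, norm_mul, norm_pow]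
      _ ≤ ‖1 - a * q ^ j‖ := norm_sub_norm_le _ _
  refine le_trans ?_ hnorm
  rcases le_or_gt n J with h | h
  · have hPn : P ≤ ∏ j ∈ range n, (1 - x j) := by
      rw [hP, ← Finset.prod_range_mul_prod_Ico (fun j => 1 - x j) h]
      have h1 : ∏ j ∈ Finset.Ico n J, (1 - x j) ≤ 1 :=
        Finset.prod_le_one (fun j _ => by linarith [hx1 j]) (fun j _ => by linarith [hx0 j])
      have h2 : (0:ℝ) ≤ ∏ j ∈ range n, (1 - x j) :=
        Finset.prod_nonneg (fun j _ => by linarith [hx1 j])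
      calc (∏ j ∈ range n, (1 - x j)) * ∏ j ∈ Finset.Ico n J, (1 - x j)
          ≤ (∏ j ∈ range n, (1 - x j)) * 1 := mul_le_mul_of_nonneg_left h1 h2
        _ = _ := mul_one _
    nlinarith [hPpos]
  · have hsplit : (∏ j ∈ range J, (1 - x j)) * ∏ j ∈ Finset.Ico J n, (1 - x j)
        = ∏ j ∈ range n, (1 - x j) := Finset.prod_range_mul_prod_Ico _ h.le
    rw [← hsplit]
    have hIco : (1:ℝ)/2 ≤ ∏ j ∈ Finset.Ico J n, (1 - x j) := by
      calc (1:ℝ)/2 ≤ 1 - ∑ j ∈ Finset.Ico J n, x j := by linarith [htail n]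
        _ ≤ ∏ j ∈ Finset.Ico J n, (1 - x j) :=
            one_sub_sum_le_prod (fun i _ => hx0 i) (fun i _ => (hx1 i).le)
    exact mul_le_mul_of_nonneg_left hIco hPpos.le

lemma qPoch_zero (a q : ℂ) : qPoch a q 0 = 1 := Finset.prod_range_zero _

lemma qBinom_zero (hq : ‖q‖ < 1) (N : ℕ) : qBinom q N 0 = 1 := by
  rw [qBinom, qPoch_zero, one_mul, Nat.sub_zero, div_self (qPoch_ne_zero hq hq N)]

lemma qBinom_self (hq : ‖q‖ < 1) (N : ℕ) : qBinom q N N = 1 := by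
  rw [qBinom, Nat.sub_self, qPoch_zero, mul_one, div_self (qPoch_ne_zero hq hq N)]

lemma qBinom_pascal₁ (hq : ‖q‖ < 1) {N m : ℕ} (h : m + 1 ≤ N) :
    qBinom q (N + 1) (m + 1) = q ^ (m + 1) * qBinom q N (m + 1) + qBinom q N m := by
  obtain ⟨d, rfl⟩ : ∃ d, N = m + 1 + d := ⟨N - (m + 1), by omega⟩
  simp only [qBinom]
  rw [show m + 1 + d + 1 - (m + 1) = d + 1 by omega, show m + 1 + d - (m + 1) = d by omega,
    show m + 1 + d - m = d + 1 by omega]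
  rw [show m + 1 + d + 1 = (m + 1 + d) + 1 by omega, qPoch_succ, qPoch_succ q q d,
    qPoch_succ q q m]
  have h1 := qPoch_ne_zero (a := q) hq hq m
  have h2 := qPoch_ne_zero (a := q) hq hq d
  have h3 := qPoch_ne_zero (a := q) hq hq (m + 1 + d)
  have h4 := factor_ne_zero (a := q) hq hq m
  have h5 := factor_ne_zero (a := q) hq hq d
  field_simp
  ring

lemma qBinom_pascal₂ (hq : ‖q‖ < 1) {N m : ℕ} (h : m + 1 ≤ N) :
    qBinom q (N + 1) (m + 1) = qBinom q N (m + 1) + q ^ (N - m) * qBinom q N m := by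
  obtain ⟨d, rfl⟩ : ∃ d, N = m + 1 + d := ⟨N - (m + 1), by omega⟩
  simp only [qBinom]
  rw [show m + 1 + d + 1 - (m + 1) = d + 1 by omega, show m + 1 + d - (m + 1) = d by omega,
    show m + 1 + d - m = d + 1 by omega]
  rw [show m + 1 + d + 1 = (m + 1 + d) + 1 by omega, qPoch_succ, qPoch_succ q q d,
    qPoch_succ q q m]
  have h1 := qPoch_ne_zero (a := q) hq hq m
  have h2 := qPoch_ne_zero (a := q) hq hq d
  have h3 := qPoch_ne_zero (a := q) hq hq (m + 1 + d)
  have h4 := factor_ne_zero (a := q) hq hq m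
  have h5 := factor_ne_zero (a := q) hq hq d
  field_simp
  ring

lemma tri (s : ℕ) : (s + 1) * ((s + 1) - 1) / 2 = s * (s - 1) / 2 + s := by
  rcases s with _ | t
  · rfl
  · show (t + 2) * (t + 1) / 2 = (t + 1) * t / 2 + (t + 1)
    rw [show (t + 2) * (t + 1) = (t + 1) * t + 2 * (t + 1) by ring,
      Nat.add_mul_div_left _ _ (by norm_num : 0 < 2)]

lemma tri_add (m n : ℕ) : m * (m - 1) / 2 + n * (n - 1) / 2 + m * n
    = (m + n) * ((m + n) - 1) / 2 := by
  induction n with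
  | zero => simp
  | succ n ih =>
    rw [show m + (n + 1) = (m + n) + 1 by omega, tri (m + n), ← ih, tri n, Nat.mul_succ]
    set A := m * (m - 1) / 2
    set B := n * (n - 1) / 2
    omega

/-- Finite q-binomial theorem. -/
lemma qbinom_theorem (hq : ‖q‖ < 1) (z : ℂ) : ∀ N : ℕ,
    ∏ j ∈ range N, (1 + z * q ^ j)
      = ∑ m ∈ range (N + 1), qBinom q N m * (q ^ (m * (m - 1) / 2) * z ^ m) := by
  intro N
  induction N with
  | zero => simp [qBinom, qPoch_zero]
  | succ N ih =>
    have key : ∏ j ∈ range (N + 1), (1 + z * q ^ j)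
        = ∑ m ∈ range (N + 1), (qBinom q N m * (q ^ (m * (m - 1) / 2) * z ^ m)
            + qBinom q N m * (q ^ (m * (m - 1) / 2 + N) * z ^ (m + 1))) := by
      rw [Finset.prod_range_succ, ih, Finset.sum_mul]
      apply Finset.sum_congr rfl
      intro m _
      rw [pow_add, pow_succ]
      ring
    rw [key, Finset.sum_add_distrib]
    rw [show N + 1 + 1 = (N + 1) + 1 from rfl]
    rw [Finset.sum_range_succ (fun m => qBinom q (N+1) m * (q ^ (m * (m - 1) / 2) * z ^ m)) (N+1)]
    rw [Finset.sum_range_succ' (fun m => qBinom q (N+1) m * (q ^ (m * (m - 1) / 2) * z ^ m)) N]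
    rw [Finset.sum_range_succ' (fun m => qBinom q N m * (q ^ (m * (m - 1) / 2) * z ^ m)) N]
    rw [Finset.sum_range_succ (fun m => qBinom q N m * (q ^ (m * (m - 1) / 2 + N) * z ^ (m+1))) N]
    have e0 : qBinom q (N+1) 0 * (q ^ (0 * (0 - 1) / 2) * z ^ 0)
        = qBinom q N 0 * (q ^ (0 * (0 - 1) / 2) * z ^ 0) := by
      rw [qBinom_zero hq, qBinom_zero hq]
    have eTop : qBinom q (N+1) (N+1) * (q ^ ((N+1) * ((N+1) - 1) / 2) * z ^ (N+1))
        = qBinom q N N * (q ^ (N * (N - 1) / 2 + N) * z ^ (N+1)) := by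
      rw [qBinom_self hq, qBinom_self hq, tri N]
    have eMid : ∀ i ∈ range N,
        qBinom q (N+1) (i+1) * (q ^ ((i+1) * ((i+1) - 1) / 2) * z ^ (i+1))
          = qBinom q N (i+1) * (q ^ ((i+1) * ((i+1) - 1) / 2) * z ^ (i+1))
            + qBinom q N i * (q ^ (i * (i - 1) / 2 + N) * z ^ (i+1)) := by
      intro i hi
      rw [Finset.mem_range] at hi
      rw [qBinom_pascal₂ hq (by omega : i + 1 ≤ N), tri i]
      have hNi : N - i + (i * (i - 1) / 2 + i) = i * (i - 1) / 2 + N := by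
        set A := i * (i - 1) / 2
        omega
      rw [add_mul, ← hNi, pow_add]
      ring
    rw [Finset.sum_congr rfl eMid, Finset.sum_add_distrib, e0, eTop]
    ring

/-- The key finite identity: `∑ qBinom(N,m) (a;q)_m a^(N-m) = 1`. -/
lemma key_identity (hq : ‖q‖ < 1) (a : ℂ) : ∀ N : ℕ,
    ∑ m ∈ range (N + 1), qBinom q N m * qPoch a q m * a ^ (N - m) = 1 := by
  intro N
  induction N with
  | zero => simp [qBinom, qPoch_zero]
  | succ N ih =>
    have key : ∑ m ∈ range (N + 1), (q ^ m * qBinom q N m * qPoch a q m * a ^ (N + 1 - m)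
          + qBinom q N m * qPoch a q (m + 1) * a ^ (N - m)) = 1 := by
      rw [← ih]
      apply Finset.sum_congr rfl
      intro m hm
      rw [Finset.mem_range] at hm
      rw [qPoch_succ, show N + 1 - m = (N - m) + 1 by omega, pow_succ]
      ring
    rw [← key, Finset.sum_add_distrib]
    rw [show N + 1 + 1 = (N + 1) + 1 from rfl]
    rw [Finset.sum_range_succ (fun m => qBinom q (N+1) m * qPoch a q m * a ^ (N + 1 - m)) (N+1)]
    rw [Finset.sum_range_succ' (fun m => qBinom q (N+1) m * qPoch a q m * a ^ (N + 1 - m)) N]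
    rw [Finset.sum_range_succ' (fun m => q ^ m * qBinom q N m * qPoch a q m * a ^ (N + 1 - m)) N]
    rw [Finset.sum_range_succ (fun m => qBinom q N m * qPoch a q (m + 1) * a ^ (N - m)) N]
    have e0 : qBinom q (N+1) 0 * qPoch a q 0 * a ^ (N + 1 - 0)
        = q ^ 0 * qBinom q N 0 * qPoch a q 0 * a ^ (N + 1 - 0) := by
      rw [qBinom_zero hq, qBinom_zero hq]
      ring
    have eTop : qBinom q (N+1) (N+1) * qPoch a q (N+1) * a ^ (N + 1 - (N+1))
        = qBinom q N N * qPoch a q (N + 1) * a ^ (N - N) := by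
      rw [qBinom_self hq, qBinom_self hq, Nat.sub_self, Nat.sub_self]
    have eMid : ∀ i ∈ range N,
        qBinom q (N+1) (i+1) * qPoch a q (i+1) * a ^ (N + 1 - (i+1))
          = q ^ (i+1) * qBinom q N (i+1) * qPoch a q (i+1) * a ^ (N + 1 - (i+1))
            + qBinom q N i * qPoch a q (i + 1) * a ^ (N - i) := by
      intro i hi
      rw [Finset.mem_range] at hi
      rw [qBinom_pascal₁ hq (by omega : i + 1 ≤ N),
        show N + 1 - (i + 1) = N - i by omega]
      ring
    rw [Finset.sum_congr rfl eMid, Finset.sum_add_distrib, e0, eTop]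
    ring

lemma tendsto_qBinom (hq : ‖q‖ < 1) (m : ℕ) :
    Tendsto (fun N => qBinom q N m) atTop (𝓝 (1 / qPoch q q m)) := by
  have hP := tendsto_qPoch (a := q) hq hq
  have h2 : Tendsto (fun N : ℕ => qPoch q q (N - m)) atTop (𝓝 (qPochInf q q)) :=
    hP.comp (tendsto_sub_atTop_nat m)
  have h3 : Tendsto (fun N => qPoch q q N / (qPoch q q m * qPoch q q (N - m))) atTop
      (𝓝 (qPochInf q q / (qPoch q q m * qPochInf q q))) :=
    hP.div (tendsto_const_nhds.mul h2)
      (mul_ne_zero (qPoch_ne_zero hq hq m) (qPochInf_ne_zero hq hq))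
  have hval : qPochInf q q / (qPoch q q m * qPochInf q q) = 1 / qPoch q q m := by
    rw [mul_comm, ← div_div, div_self (qPochInf_ne_zero hq hq)]
  rw [hval] at h3
  exact h3

lemma qBinom_bound (hq : ‖q‖ < 1) :
    ∃ M : ℝ, 0 < M ∧ ∀ N m : ℕ, ‖qBinom q N m‖ ≤ M := by
  obtain ⟨c, hc, hlow⟩ := exists_qPoch_lower (a := q) hq hq
  refine ⟨Real.exp (‖q‖ * (1 - ‖q‖)⁻¹) / (c * c), by positivity, fun N m => ?_⟩
  rw [qBinom, norm_div, norm_mul]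
  apply div_le_div₀ (by positivity) (norm_qPoch_le hq N) (by positivity)
  calc c * c ≤ ‖qPoch q q m‖ * ‖qPoch q q (N - m)‖ :=
        mul_le_mul (hlow m) (hlow (N - m)) hc.le (norm_nonneg _)
    _ ≤ _ := le_rfl

/-- Euler's identity: `∑ q^(C(n,2)) z^n / (q;q)_n = (-z; q)_∞`. -/
lemma euler (hq : ‖q‖ < 1) {z : ℂ} (hz : ‖z‖ < 1) :
    ∑' n : ℕ, q ^ (n * (n - 1) / 2) * z ^ n / qPoch q q n = qPochInf (-z) q := by
  obtain ⟨M, hM, hMb⟩ := qBinom_bound hq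
  set f : ℕ → ℕ → ℂ := fun N m =>
    if m ∈ range (N + 1) then qBinom q N m * (q ^ (m * (m - 1) / 2) * z ^ m) else 0 with hf
  set g : ℕ → ℂ := fun m => q ^ (m * (m - 1) / 2) * z ^ m / qPoch q q m with hg
  have hqc : ∀ n : ℕ, ‖q ^ (n * (n - 1) / 2) * z ^ n‖ ≤ ‖z‖ ^ n := by
    intro n
    rw [norm_mul, norm_pow, norm_pow]
    calc ‖q‖ ^ (n * (n - 1) / 2) * ‖z‖ ^ n ≤ 1 * ‖z‖ ^ n :=
        mul_le_mul_of_nonneg_right (pow_le_one₀ (norm_nonneg q) hq.le)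
          (pow_nonneg (norm_nonneg z) n)
      _ = ‖z‖ ^ n := one_mul _
  have hmain : Tendsto (fun N => ∑' m : ℕ, f N m) atTop (𝓝 (∑' m, g m)) := by
    apply tendsto_tsum_of_dominated_convergence
      (bound := fun m => M * ‖z‖ ^ m)
      ((summable_geometric_of_lt_one (norm_nonneg z) hz).mul_left M)
    · intro m
      have hev : ∀ᶠ N in atTop, f N m = qBinom q N m * (q ^ (m * (m - 1) / 2) * z ^ m) := by
        filter_upwards [eventually_ge_atTop m] with N hN
        rw [hf]
        simp only [Finset.mem_range]
        rw [if_pos (by omega)]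
      have htend : Tendsto (fun N => qBinom q N m * (q ^ (m * (m - 1) / 2) * z ^ m)) atTop
          (𝓝 (1 / qPoch q q m * (q ^ (m * (m - 1) / 2) * z ^ m))) :=
        (tendsto_qBinom hq m).mul_const _
      have hgv : 1 / qPoch q q m * (q ^ (m * (m - 1) / 2) * z ^ m) = g m := by
        rw [hg]; field_simp
      rw [← hgv]
      exact Tendsto.congr' (hev.mono fun N h => h.symm) htend
    · filter_upwards with N m
      simp only [hf]
      by_cases h : m ∈ range (N + 1)
      · rw [if_pos h, norm_mul]
        exact mul_le_mul (hMb N m) (hqc m) (norm_nonneg _) hM.le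
      · rw [if_neg h]
        simp only [norm_zero]
        positivity
  have heq : ∀ N : ℕ, ∑' m : ℕ, f N m = ∏ j ∈ range N, (1 - (-z) * q ^ j) := by
    intro N
    have : ∑' m : ℕ, f N m = ∑ m ∈ range (N + 1), f N m :=
      tsum_eq_sum (fun m hm => by rw [hf]; simp only []; rw [if_neg hm])
    rw [this]
    have : ∑ m ∈ range (N + 1), f N m
        = ∑ m ∈ range (N + 1), qBinom q N m * (q ^ (m * (m - 1) / 2) * z ^ m) :=
      Finset.sum_congr rfl (fun m hm => by rw [hf]; simp only []; rw [if_pos hm])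
    rw [this, ← qbinom_theorem hq z N]
    apply Finset.prod_congr rfl
    intro j _
    ring
  have hprod : Tendsto (fun N => ∑' m : ℕ, f N m) atTop (𝓝 (qPochInf (-z) q)) := by
    rw [show (fun N => ∑' m : ℕ, f N m) = fun N => ∏ j ∈ range N, (1 - (-z) * q ^ j)
      from funext heq]
    exact tendsto_qPoch (by rwa [norm_neg]) hq
  exact tendsto_nhds_unique hmain hprod

lemma expo (k m n : ℕ) : m * (m - 1) / 2 + (2 * k + 1) * m + (n * (n - 1) / 2 + (3 * k + 1 + m) * n)
    = (m + n) * ((m + n) - 1) / 2 + ((2 * k + 1) * (m + n) + k * n) := by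
  have h := tri_add m n
  set A := m * (m - 1) / 2
  set B := n * (n - 1) / 2
  set C := (m + n) * ((m + n) - 1) / 2
  rw [← h]
  ring


set_option maxHeartbeats 1000000 in
/-- The q-Gauss summation step (a limiting case used in the proof of
Slater's identity No. 19). -/
theorem qGauss_step (k : ℕ) (hk : 1 ≤ k) (q : ℂ) (hq0 : q ≠ 0)
    (hq : ‖q‖ < 1) :
    ∑' m : ℕ, q ^ (m * (m - 1) / 2 + (2 * k + 1) * m) * qPoch (q ^ k) q m /
        (qPoch q q m * qPoch (-(q ^ (3 * k + 1))) q m) =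
      qPochInf (-(q ^ (2 * k + 1))) q / qPochInf (-(q ^ (3 * k + 1))) q := by
  have hq' : ‖q‖ < 1 := hq
  have hpow : ∀ {s : ℕ}, 1 ≤ s → ‖q ^ s‖ < 1 := by
    intro s hs
    rw [norm_pow]
    calc ‖q‖ ^ s ≤ ‖q‖ ^ 1 := pow_le_pow_of_le_one (norm_nonneg q) hq'.le hs
      _ = ‖q‖ := pow_one _
      _ < 1 := hq'
  set c : ℂ := -(q ^ (3 * k + 1)) with hc_def
  have hc : ‖c‖ < 1 := by rw [hc_def, norm_neg]; exact hpow (by omega)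
  have ha : ‖q ^ k‖ < 1 := hpow hk
  have hw : ‖q ^ (2 * k + 1)‖ < 1 := hpow (by omega)
  have hcm : ∀ m : ℕ, ‖c * q ^ m‖ < 1 := fun m => norm_aqj_lt hc hq' m
  set F : ℕ × ℕ → ℂ := fun p =>
    q ^ (p.1 * (p.1 - 1) / 2 + (2 * k + 1) * p.1) * qPoch (q ^ k) q p.1 / qPoch q q p.1 *
      (q ^ (p.2 * (p.2 - 1) / 2) * (q ^ (3 * k + 1 + p.1)) ^ p.2 / qPoch q q p.2) with hF_def
  -- summability of F
  obtain ⟨cl, hcl, hlow⟩ := exists_qPoch_lower (a := q) hq' hq'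
  have hFsum : Summable F := by
    set K : ℝ := Real.exp (‖q ^ k‖ * (1 - ‖q‖)⁻¹) / cl with hK
    set L : ℝ := 1 / cl with hL
    have hbound : ∀ p : ℕ × ℕ, ‖F p‖ ≤ K * ‖q‖ ^ p.1 * (L * ‖q‖ ^ p.2) := by
      rintro ⟨m, n⟩
      have h1 : ‖q ^ (m * (m - 1) / 2 + (2 * k + 1) * m) * qPoch (q ^ k) q m / qPoch q q m‖
          ≤ K * ‖q‖ ^ m := by
        rw [norm_div, norm_mul, norm_pow]
        have hnum : ‖q‖ ^ (m * (m - 1) / 2 + (2 * k + 1) * m) * ‖qPoch (q ^ k) q m‖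
            ≤ ‖q‖ ^ m * Real.exp (‖q ^ k‖ * (1 - ‖q‖)⁻¹) :=
          mul_le_mul (pow_le_pow_of_le_one (norm_nonneg q) hq'.le
              ((Nat.le_mul_of_pos_left m (by omega : 0 < 2 * k + 1)).trans (Nat.le_add_left _ _)))
            (norm_qPoch_le hq' m) (norm_nonneg _) (pow_nonneg (norm_nonneg q) m)
        calc ‖q‖ ^ (m * (m - 1) / 2 + (2 * k + 1) * m) * ‖qPoch (q ^ k) q m‖ / ‖qPoch q q m‖
            ≤ ‖q‖ ^ m * Real.exp (‖q ^ k‖ * (1 - ‖q‖)⁻¹) / cl :=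
              div_le_div₀ (by positivity) hnum hcl (hlow m)
          _ = K * ‖q‖ ^ m := by rw [hK]; ring
      have h2 : ‖q ^ (n * (n - 1) / 2) * (q ^ (3 * k + 1 + m)) ^ n / qPoch q q n‖
          ≤ L * ‖q‖ ^ n := by
        rw [norm_div, norm_mul, norm_pow, norm_pow, norm_pow, ← pow_mul]
        have hnum : ‖q‖ ^ (n * (n - 1) / 2) * ‖q‖ ^ ((3 * k + 1 + m) * n) ≤ 1 * ‖q‖ ^ n := by
          rw [← pow_add, one_mul]
          exact pow_le_pow_of_le_one (norm_nonneg q) hq'.le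
            ((Nat.le_mul_of_pos_left n (by omega : 0 < 3 * k + 1 + m)).trans (Nat.le_add_left _ _))
        calc ‖q‖ ^ (n * (n - 1) / 2) * ‖q‖ ^ ((3 * k + 1 + m) * n) / ‖qPoch q q n‖
            ≤ 1 * ‖q‖ ^ n / cl := div_le_div₀ (by positivity) hnum hcl (hlow n)
          _ = L * ‖q‖ ^ n := by rw [hL]; ring
      calc ‖F (m, n)‖ = ‖q ^ (m * (m - 1) / 2 + (2 * k + 1) * m) * qPoch (q ^ k) q m /
            qPoch q q m‖ * ‖q ^ (n * (n - 1) / 2) * (q ^ (3 * k + 1 + m)) ^ n / qPoch q q n‖ := by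
            rw [hF_def, norm_mul]
        _ ≤ K * ‖q‖ ^ m * (L * ‖q‖ ^ n) :=
            mul_le_mul h1 h2 (norm_nonneg _) (by positivity)
    have hgs : Summable (fun p : ℕ × ℕ => K * ‖q‖ ^ p.1 * (L * ‖q‖ ^ p.2)) :=
      Summable.mul_of_nonneg
        ((summable_geometric_of_lt_one (norm_nonneg q) hq').mul_left K)
        ((summable_geometric_of_lt_one (norm_nonneg q) hq').mul_left L)
        (fun m => by positivity) (fun n => by positivity)
    exact Summable.of_norm_bounded hgs hbound
  -- Step A: rewrite each summand
  have hstepA : ∀ m : ℕ,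
      q ^ (m * (m - 1) / 2 + (2 * k + 1) * m) * qPoch (q ^ k) q m /
          (qPoch q q m * qPoch c q m)
        = (q ^ (m * (m - 1) / 2 + (2 * k + 1) * m) * qPoch (q ^ k) q m / qPoch q q m *
            qPochInf (c * q ^ m) q) / qPochInf c q := by
    intro m
    rw [qPochInf_split hc hq' m]
    have h1 := qPoch_ne_zero (a := q) hq' hq' m
    have h2 := qPoch_ne_zero hc hq' m
    have h3 := qPochInf_ne_zero (norm_aqj_lt hc hq' m) hq'
    field_simp
  -- Step C : each numerator term as a tsum over n
  have hstepC : ∀ m : ℕ,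
      q ^ (m * (m - 1) / 2 + (2 * k + 1) * m) * qPoch (q ^ k) q m / qPoch q q m *
          qPochInf (c * q ^ m) q
        = ∑' n : ℕ, F (m, n) := by
    intro m
    have hcm' : c * q ^ m = -(q ^ (3 * k + 1 + m)) := by rw [pow_add]; ring
    rw [hcm', ← euler hq' (hpow (by omega : 1 ≤ 3 * k + 1 + m)), ← tsum_mul_left]
  -- inner antidiagonal evaluation
  have hinner : ∀ N : ℕ, ∑ p ∈ Finset.HasAntidiagonal.antidiagonal N, F p
      = q ^ (N * (N - 1) / 2 + (2 * k + 1) * N) / qPoch q q N := by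
    intro N
    rw [Finset.Nat.sum_antidiagonal_eq_sum_range_succ_mk]
    have hterm : ∀ m ∈ range (N + 1), F (m, N - m)
        = q ^ (N * (N - 1) / 2 + (2 * k + 1) * N) / qPoch q q N *
            (qBinom q N m * qPoch (q ^ k) q m * (q ^ k) ^ (N - m)) := by
      intro m hm
      rw [Finset.mem_range] at hm
      have hmn : m + (N - m) = N := by omega
      have hE := expo k m (N - m)
      rw [hmn] at hE
      have h1 := qPoch_ne_zero (a := q) hq' hq' m
      have h2 := qPoch_ne_zero (a := q) hq' hq' (N - m)
      have h3 := qPoch_ne_zero (a := q) hq' hq' N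
      have hqE : q ^ (m * (m - 1) / 2 + (2 * k + 1) * m) *
          (q ^ ((N - m) * ((N - m) - 1) / 2) * q ^ ((3 * k + 1 + m) * (N - m)))
          = q ^ (N * (N - 1) / 2 + (2 * k + 1) * N) * q ^ (k * (N - m)) := by
        rw [← pow_add q, ← pow_add q, ← pow_add q, hE, add_assoc]
      have e1 : F (m, N - m) = q ^ (m * (m - 1) / 2 + (2 * k + 1) * m) *
          (q ^ ((N - m) * ((N - m) - 1) / 2) * q ^ ((3 * k + 1 + m) * (N - m))) *
          qPoch (q ^ k) q m / (qPoch q q m * qPoch q q (N - m)) := by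
        rw [hF_def]
        simp only []
        rw [← pow_mul q (3 * k + 1 + m) (N - m)]
        ring
      have e2 : q ^ (N * (N - 1) / 2 + (2 * k + 1) * N) / qPoch q q N *
          (qBinom q N m * qPoch (q ^ k) q m * (q ^ k) ^ (N - m))
          = q ^ (N * (N - 1) / 2 + (2 * k + 1) * N) * q ^ (k * (N - m)) *
          qPoch (q ^ k) q m / (qPoch q q m * qPoch q q (N - m)) := by
        rw [qBinom, ← pow_mul q k (N - m)]
        field_simp
      rw [e1, e2, hqE]
    rw [Finset.sum_congr rfl hterm, ← Finset.mul_sum, key_identity hq' (q ^ k) N, mul_one]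
  -- assemble
  calc ∑' m : ℕ, q ^ (m * (m - 1) / 2 + (2 * k + 1) * m) * qPoch (q ^ k) q m /
          (qPoch q q m * qPoch c q m)
      = ∑' m : ℕ, (q ^ (m * (m - 1) / 2 + (2 * k + 1) * m) * qPoch (q ^ k) q m / qPoch q q m *
          qPochInf (c * q ^ m) q) / qPochInf c q := tsum_congr hstepA
    _ = (∑' m : ℕ, q ^ (m * (m - 1) / 2 + (2 * k + 1) * m) * qPoch (q ^ k) q m / qPoch q q m *
          qPochInf (c * q ^ m) q) / qPochInf c q := by rw [tsum_div_const]
    _ = (∑' m : ℕ, ∑' n : ℕ, F (m, n)) / qPochInf c q := by rw [tsum_congr hstepC]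
    _ = (∑' p : ℕ × ℕ, F p) / qPochInf c q := by rw [← Summable.tsum_prod hFsum]
    _ = (∑' σ : Σ N : ℕ, Finset.HasAntidiagonal.antidiagonal N, F (Finset.HasAntidiagonal.sigmaAntidiagonalEquivProd σ)) /
          qPochInf c q := by rw [Equiv.tsum_eq Finset.HasAntidiagonal.sigmaAntidiagonalEquivProd F]
    _ = (∑' N : ℕ, ∑' p : Finset.HasAntidiagonal.antidiagonal N, F p) / qPochInf c q := by
        congr 1
        exact Summable.tsum_sigma ((Equiv.summable_iff Finset.HasAntidiagonal.sigmaAntidiagonalEquivProd).2 hFsum)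
    _ = (∑' N : ℕ, ∑ p ∈ Finset.HasAntidiagonal.antidiagonal N, F p) / qPochInf c q := by
        congr 1
        exact tsum_congr fun N => Finset.tsum_subtype _ F
    _ = (∑' N : ℕ, q ^ (N * (N - 1) / 2 + (2 * k + 1) * N) / qPoch q q N) / qPochInf c q := by
        rw [tsum_congr hinner]
    _ = (∑' N : ℕ, q ^ (N * (N - 1) / 2) * (q ^ (2 * k + 1)) ^ N / qPoch q q N) /
          qPochInf c q := by
        congr 1
        apply tsum_congr
        intro N
        rw [← pow_mul q (2 * k + 1) N, ← pow_add]
    _ = qPochInf (-(q ^ (2 * k + 1))) q / qPochInf c q := by rw [euler hq' hw]
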